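/- Let (X,d) be a metric space. For sequences 𝐱=(x_i)_{i∈ℕ}, 𝐲=(y_i)_{i∈ℕ} ∈ X^ℕ define the extended distance d_∞(𝐱,𝐲) := (Σ_{i=1}^∞ d(x_i,y_i)²)^{1/2} ∈ [0,∞]. Suppose d_∞(𝐱,𝐲) < ∞, and for each n ∈ ℕ let A_n := B̄_{2^{−n}}(y₁) × ⋯ × B̄_{2^{−n}}(y_n) × X × X × ⋯ ⊆ X^ℕ, where B̄_r(y) is the closed ball of radius r about y. Then lim_{n→∞} inf_{𝐳∈A_n} d_∞(𝐱,𝐳) = d_∞(𝐱,𝐲). -/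

import Mathlib

open MeasureTheory Filter Set
open scoped ENNReal NNReal Topology

noncomputable section

namespace Config2

/-- The `ℓ²`-type extended distance on sequences:
`d_∞(𝐱,𝐲) = (Σᵢ d(xᵢ,yᵢ)²)^{1/2} ∈ [0,∞]`. -/
def dInfty {X : Type} [MetricSpace X] (x y : ℕ → X) : ℝ≥0∞ :=
  (∑' i, ENNReal.ofReal (dist (x i) (y i) ^ 2)) ^ (1 / 2 : ℝ)

/-- Finite-dimensional Minkowski-type bound used in the main theorem. -/
lemma sqrt_sum_le_aux {X : Type} [MetricSpace X] (x y z : ℕ → X) (n : ℕ) (r : ℝ)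
    (hr : 0 ≤ r) (hz : ∀ i < n, dist (z i) (y i) ≤ r) :
    Real.sqrt (∑ i ∈ Finset.range n, dist (x i) (y i) ^ 2) ≤
      Real.sqrt (∑ i ∈ Finset.range n, dist (x i) (z i) ^ 2) + Real.sqrt (n * r ^ 2) := by
  set u : EuclideanSpace ℝ (Fin n) := WithLp.toLp 2 (fun i : Fin n => dist (x i.1) (z i.1)) with hu
  set v : EuclideanSpace ℝ (Fin n) := WithLp.toLp 2 (fun i : Fin n => dist (z i.1) (y i.1)) with hv
  have h1 : Real.sqrt (∑ i ∈ Finset.range n, dist (x i) (y i) ^ 2) ≤ ‖u + v‖ := by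
    rw [EuclideanSpace.norm_eq]
    simp only [Real.norm_eq_abs, sq_abs]
    rw [← Fin.sum_univ_eq_sum_range (fun i => dist (x i) (y i) ^ 2)]
    refine Real.sqrt_le_sqrt (Finset.sum_le_sum fun i _ => ?_)
    have h : (u + v) i = u i + v i := rfl
    rw [h]
    exact pow_le_pow_left₀ dist_nonneg (dist_triangle _ _ _) 2
  have h2 : ‖u‖ = Real.sqrt (∑ i ∈ Finset.range n, dist (x i) (z i) ^ 2) := by
    rw [EuclideanSpace.norm_eq]
    simp only [Real.norm_eq_abs, sq_abs]
    rw [← Fin.sum_univ_eq_sum_range (fun i => dist (x i) (z i) ^ 2)]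
  have h3 : ‖v‖ ≤ Real.sqrt (n * r ^ 2) := by
    rw [EuclideanSpace.norm_eq]
    simp only [Real.norm_eq_abs, sq_abs]
    have hs : ∑ i : Fin n, v i ^ 2 ≤ ∑ _i : Fin n, r ^ 2 :=
      Finset.sum_le_sum fun i _ => pow_le_pow_left₀ dist_nonneg (hz i.1 i.2) 2
    apply Real.sqrt_le_sqrt
    simpa using hs
  calc Real.sqrt (∑ i ∈ Finset.range n, dist (x i) (y i) ^ 2) ≤ ‖u + v‖ := h1
    _ ≤ ‖u‖ + ‖v‖ := norm_add_le _ _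
    _ ≤ _ := by rw [h2]; exact add_le_add_right h3 _

/-- **Approximation of `d_∞` by distances to shrinking cylinders** (Lemma `l:AuxStoL`).
Let `(X,d)` be a metric space and `𝐱, 𝐲 ∈ X^ℕ` with `d_∞(𝐱,𝐲) < ∞`. For `n ∈ ℕ` let
`A_n := B̄_{2^{-n}}(y₁) × ⋯ × B̄_{2^{-n}}(y_n) × X × X × ⋯`. Then
`lim_n inf_{𝐳 ∈ A_n} d_∞(𝐱,𝐳) = d_∞(𝐱,𝐲)`. -/
theorem dInfty_tendsto_of_shrinking_cylinders
    {X : Type} [MetricSpace X] (x y : ℕ → X) (hxy : dInfty x y ≠ ∞)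
    (A : ℕ → Set (ℕ → X))
    (hA : ∀ n, A n = {z : ℕ → X | ∀ i < n, z i ∈ Metric.closedBall (y i) ((2 : ℝ) ^ (-(n : ℤ)))}) :
    Tendsto (fun n => ⨅ z ∈ A n, dInfty x z) atTop (nhds (dInfty x y)) := by
  set L := dInfty x y with hL
  -- real truncated distance
  set t : ℕ → ℝ := fun n => Real.sqrt (∑ i ∈ Finset.range n, dist (x i) (y i) ^ 2) with ht
  set e : ℕ → ℝ := fun n => Real.sqrt (n * ((2 : ℝ) ^ (-(n : ℤ))) ^ 2) with he
  -- T n in ENNReal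
  have hTn : ∀ n, (∑ i ∈ Finset.range n, ENNReal.ofReal (dist (x i) (y i) ^ 2)) ^ (1 / 2 : ℝ)
      = ENNReal.ofReal (t n) := by
    intro n
    simp only [ht]
    rw [← ENNReal.ofReal_sum_of_nonneg (fun i _ => sq_nonneg _), Real.sqrt_eq_rpow,
      ENNReal.ofReal_rpow_of_nonneg (Finset.sum_nonneg fun i _ => sq_nonneg _) (by norm_num)]
  -- T n → L
  have hT : Tendsto (fun n => ENNReal.ofReal (t n)) atTop (nhds L) := by
    have h1 : Tendsto (fun n => ∑ i ∈ Finset.range n, ENNReal.ofReal (dist (x i) (y i) ^ 2))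
        atTop (nhds (∑' i, ENNReal.ofReal (dist (x i) (y i) ^ 2))) :=
      ENNReal.tendsto_nat_tsum _
    have h2 := (ENNReal.continuous_rpow_const (y := (1 / 2 : ℝ))).continuousAt.tendsto.comp h1
    simpa only [Function.comp_def, hTn, hL, dInfty] using h2
  -- e n → 0
  have hE : Tendsto e atTop (nhds 0) := by
    have h0 : Tendsto (fun n : ℕ => (n : ℝ) * (1 / 4 : ℝ) ^ n) atTop (nhds 0) :=
      tendsto_self_mul_const_pow_of_lt_one (by norm_num) (by norm_num)
    have heq : ∀ n : ℕ, (n : ℝ) * ((2 : ℝ) ^ (-(n : ℤ))) ^ 2 = (n : ℝ) * (1 / 4 : ℝ) ^ n := by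
      intro n
      have h : ((2 : ℝ) ^ (-(n : ℤ))) ^ 2 = (1 / 4 : ℝ) ^ n := by
        rw [zpow_neg, zpow_natCast, ← inv_pow, ← pow_mul, mul_comm, pow_mul]
        congr 1
        norm_num
      rw [h]
    have h1 : Tendsto (fun n : ℕ => (n : ℝ) * ((2 : ℝ) ^ (-(n : ℤ))) ^ 2) atTop (nhds 0) := by
      simpa only [heq] using h0
    have := (Real.continuous_sqrt.tendsto 0).comp h1
    simpa only [Function.comp_def, he, Real.sqrt_zero] using this
  have hE' : Tendsto (fun n => ENNReal.ofReal (e n)) atTop (nhds 0) := by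
    rw [show (0 : ℝ≥0∞) = ENNReal.ofReal 0 by simp]
    exact (ENNReal.continuous_ofReal.tendsto 0).comp hE
  -- lower bound sequence tends to L
  have hlow : Tendsto (fun n => ENNReal.ofReal (t n) - ENNReal.ofReal (e n)) atTop (nhds L) := by
    have := ENNReal.Tendsto.sub hT hE' (Or.inl hxy)
    simpa using this
  -- squeeze
  apply tendsto_of_tendsto_of_tendsto_of_le_of_le hlow tendsto_const_nhds
  · -- lower bound: ∀ n, T n - E n ≤ inf
    intro n
    apply le_iInf₂
    intro z hz
    rw [hA n] at hz
    rw [tsub_le_iff_right]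
    -- t n ≤ sqrt (partial sum for z) + e n
    have hreal : t n ≤ Real.sqrt (∑ i ∈ Finset.range n, dist (x i) (z i) ^ 2) + e n := by
      apply sqrt_sum_le_aux x y z n _ (by positivity)
      intro i hi
      have := hz i hi
      rwa [Metric.mem_closedBall] at this
    have hzle : ENNReal.ofReal (Real.sqrt (∑ i ∈ Finset.range n, dist (x i) (z i) ^ 2))
        ≤ dInfty x z := by
      have h1 : (∑ i ∈ Finset.range n, ENNReal.ofReal (dist (x i) (z i) ^ 2)) ^ (1 / 2 : ℝ)
          ≤ dInfty x z := by
        apply ENNReal.rpow_le_rpow _ (by norm_num)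
        exact ENNReal.sum_le_tsum _
      calc ENNReal.ofReal (Real.sqrt (∑ i ∈ Finset.range n, dist (x i) (z i) ^ 2))
          = (∑ i ∈ Finset.range n, ENNReal.ofReal (dist (x i) (z i) ^ 2)) ^ (1 / 2 : ℝ) := by
            rw [← ENNReal.ofReal_sum_of_nonneg (fun i _ => sq_nonneg _), Real.sqrt_eq_rpow,
              ENNReal.ofReal_rpow_of_nonneg (Finset.sum_nonneg fun i _ => sq_nonneg _)
                (by norm_num)]
        _ ≤ dInfty x z := h1
    calc ENNReal.ofReal (t n)
        ≤ ENNReal.ofReal (Real.sqrt (∑ i ∈ Finset.range n, dist (x i) (z i) ^ 2) + e n) :=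
          ENNReal.ofReal_le_ofReal hreal
      _ = ENNReal.ofReal (Real.sqrt (∑ i ∈ Finset.range n, dist (x i) (z i) ^ 2))
            + ENNReal.ofReal (e n) := ENNReal.ofReal_add (Real.sqrt_nonneg _) (Real.sqrt_nonneg _)
      _ ≤ dInfty x z + ENNReal.ofReal (e n) := add_le_add_left hzle _
  · -- upper bound: y ∈ A n
    intro n
    have hy : y ∈ A n := by
      rw [hA n]
      intro i _
      simp only [Metric.mem_closedBall, dist_self]
      positivity
    exact iInf₂_le y hy
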